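/- Let 0 < a < 1, R, R_d ∈ SO(3) with ‖R − R_d‖ ≤ 2√(2a), and e_R = ½(R_dᵀR − RᵀR_d)^∨. Then (1−a)/2 · ‖R − R_d‖² ≤ ‖e_R‖². -/

import Mathlib

open Matrix Real

noncomputable def hat (v : Fin 3 → ℝ) : Matrix (Fin 3) (Fin 3) ℝ :=
  !![0, -v 2, v 1; v 2, 0, -v 0; -v 1, v 0, 0]

noncomputable def vee (A : Matrix (Fin 3) (Fin 3) ℝ) : Fin 3 → ℝ := ![A 2 1, A 0 2, A 1 0]

/-- Frobenius norm of a 3×3 real matrix: ‖A‖ = √(tr(Aᵀ A)). -/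
noncomputable def fnorm (A : Matrix (Fin 3) (Fin 3) ℝ) : ℝ := Real.sqrt ((Aᵀ * A).trace)

/-- Euclidean norm on ℝ³. -/
noncomputable def enorm' (v : Fin 3 → ℝ) : ℝ := Real.sqrt (v ⬝ᵥ v)

/-- The special orthogonal group SO(3). -/
def SO3 (R : Matrix (Fin 3) (Fin 3) ℝ) : Prop := Rᵀ * R = 1 ∧ R.det = 1

set_option maxHeartbeats 2000000 in
theorem ER_le_eR (a : ℝ) (ha : 0 < a) (ha1 : a < 1)
    (R Rd : Matrix (Fin 3) (Fin 3) ℝ) (hR : SO3 R) (hRd : SO3 Rd)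
    (hclose : fnorm (R - Rd) ≤ 2 * Real.sqrt (2 * a)) :
    (1 - a) / 2 * fnorm (R - Rd) ^ 2 ≤
      (enorm' ((1 / 2 : ℝ) • vee (Rdᵀ * R - Rᵀ * Rd))) ^ 2 := by
  obtain ⟨hR1, hR2⟩ := hR
  obtain ⟨hRd1, hRd2⟩ := hRd
  set Q : Matrix (Fin 3) (Fin 3) ℝ := Rdᵀ * R with hQ
  have hRdr : Rd * Rdᵀ = 1 := mul_eq_one_comm.mp hRd1
  have hQl : Qᵀ * Q = 1 := by
    have : Qᵀ * Q = Rᵀ * (Rd * Rdᵀ) * R := by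
      rw [hQ, Matrix.transpose_mul, Matrix.transpose_transpose]
      noncomm_ring
    rw [this, hRdr, Matrix.mul_one, hR1]
  have hQr : Q * Qᵀ = 1 := mul_eq_one_comm.mp hQl
  have hdet : Q.det = 1 := by
    rw [hQ, Matrix.det_mul, Matrix.det_transpose, hRd2, hR2, one_mul]
  have hadj : Q.adjugate = Qᵀ := by
    have h1 : Q * Q.adjugate = 1 := by rw [Matrix.mul_adjugate, hdet, one_smul]
    calc Q.adjugate = (Qᵀ * Q) * Q.adjugate := by rw [hQl, Matrix.one_mul]
      _ = Qᵀ * (Q * Q.adjugate) := by rw [Matrix.mul_assoc]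
      _ = Qᵀ := by rw [h1, Matrix.mul_one]
  -- minor equations
  have hadj' := hadj
  rw [Matrix.adjugate_fin_three] at hadj'
  have M1 : Q 1 1 * Q 2 2 - Q 1 2 * Q 2 1 = Q 0 0 := by
    have := congrFun (congrFun hadj' 0) 0; simpa using this
  have M2 : Q 0 0 * Q 2 2 - Q 0 2 * Q 2 0 = Q 1 1 := by
    have := congrFun (congrFun hadj' 1) 1; simpa using this
  have M3 : Q 0 0 * Q 1 1 - Q 0 1 * Q 1 0 = Q 2 2 := by
    have := congrFun (congrFun hadj' 2) 2; simpa using this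
  -- row norm equations
  have E0 : Q 0 0 * Q 0 0 + Q 0 1 * Q 0 1 + Q 0 2 * Q 0 2 = 1 := by
    have := congrFun (congrFun hQr 0) 0
    simpa [Matrix.mul_apply, Fin.sum_univ_three, Matrix.one_apply, Matrix.transpose_apply] using this
  have E1 : Q 1 0 * Q 1 0 + Q 1 1 * Q 1 1 + Q 1 2 * Q 1 2 = 1 := by
    have := congrFun (congrFun hQr 1) 1
    simpa [Matrix.mul_apply, Fin.sum_univ_three, Matrix.one_apply, Matrix.transpose_apply] using this
  have E2 : Q 2 0 * Q 2 0 + Q 2 1 * Q 2 1 + Q 2 2 * Q 2 2 = 1 := by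
    have := congrFun (congrFun hQr 2) 2
    simpa [Matrix.mul_apply, Fin.sum_univ_three, Matrix.one_apply, Matrix.transpose_apply] using this
  -- trace identity
  have hmat : (R - Rd)ᵀ * (R - Rd) = Rᵀ * R - Qᵀ - Q + Rdᵀ * Rd := by
    rw [hQ, Matrix.transpose_mul, Matrix.transpose_transpose]
    rw [Matrix.transpose_sub]
    noncomm_ring
  have htr : ((R - Rd)ᵀ * (R - Rd)).trace = 6 - 2 * Q.trace := by
    rw [hmat]
    simp [Matrix.trace_add, Matrix.trace_sub, Matrix.trace_transpose, hR1, hRd1]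
    ring
  have hnn : (0:ℝ) ≤ ((R - Rd)ᵀ * (R - Rd)).trace := by
    rw [Matrix.trace]
    refine Finset.sum_nonneg fun i _ => ?_
    rw [Matrix.diag_apply, Matrix.mul_apply]
    refine Finset.sum_nonneg fun j _ => ?_
    simpa [Matrix.transpose_apply] using mul_self_nonneg ((R - Rd) j i)
  have hfn2 : fnorm (R - Rd) ^ 2 = 6 - 2 * Q.trace := by
    rw [fnorm, Real.sq_sqrt hnn, htr]
  -- bound: 6 - 2 tr Q ≤ 8 a
  have hbd : 6 - 2 * Q.trace ≤ 8 * a := by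
    have h1 : fnorm (R - Rd) ^ 2 ≤ (2 * Real.sqrt (2 * a)) ^ 2 := by
      have h0 : 0 ≤ fnorm (R - Rd) := Real.sqrt_nonneg _
      exact pow_le_pow_left₀ h0 hclose 2
    have h2 : (2 * Real.sqrt (2 * a)) ^ 2 = 8 * a := by
      rw [mul_pow, Real.sq_sqrt (by linarith)]
      ring
    rw [hfn2] at h1
    linarith [h1, h2.le, h2.ge]
  -- the error norm squared
  have hveearg : Rdᵀ * R - Rᵀ * Rd = Q - Qᵀ := by
    rw [hQ, Matrix.transpose_mul, Matrix.transpose_transpose]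
  have hdnn : ∀ (v : Fin 3 → ℝ), 0 ≤ v ⬝ᵥ v := fun v =>
    Finset.sum_nonneg fun i _ => mul_self_nonneg (v i)
  have hen2 : (enorm' ((1 / 2 : ℝ) • vee (Rdᵀ * R - Rᵀ * Rd))) ^ 2 =
      (1/4) * ((Q 2 1 - Q 1 2)^2 + (Q 0 2 - Q 2 0)^2 + (Q 1 0 - Q 0 1)^2) := by
    rw [hveearg, enorm', Real.sq_sqrt (hdnn _)]
    simp [vee, dotProduct, Fin.sum_univ_three, Matrix.sub_apply, Matrix.transpose_apply]
    ring
  have htr3 : Q.trace = Q 0 0 + Q 1 1 + Q 2 2 := Matrix.trace_fin_three Q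
  have hid : (Q 2 1 - Q 1 2)^2 + (Q 0 2 - Q 2 0)^2 + (Q 1 0 - Q 0 1)^2 =
      3 + 2*(Q 0 0 + Q 1 1 + Q 2 2) - (Q 0 0 + Q 1 1 + Q 2 2)^2 := by
    linear_combination E0 + E1 + E2 + 2*M1 + 2*M2 + 2*M3
  have hpsi : (0:ℝ) ≤ 6 - 2 * Q.trace := htr ▸ hnn
  rw [hfn2, hen2, hid]
  rw [htr3] at hbd hpsi
  nlinarith [mul_nonneg (by linarith : (0:ℝ) ≤ 3 - (Q 0 0 + Q 1 1 + Q 2 2))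
    (by linarith : (0:ℝ) ≤ 4*a - (3 - (Q 0 0 + Q 1 1 + Q 2 2)))]
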